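/- Let p ≥ 1 and let Γ ⊂ ℝ² be a line segment with unit normal n and unit tangent τ. If v ∈ ℙ_p(ℝ²) is a polynomial of degree ≤ p such that v|_Γ = 0, ∂_n v|_Γ = 0, and ∂_n^l Δv|_Γ = 0 for l = 0, 1, …, p−2, then v ≡ 0. -/

import Mathlib

/-- Evaluation of a bivariate polynomial as a function `ℝ × ℝ → ℝ`. -/
noncomputable def polyEval (P : MvPolynomial (Fin 2) ℝ) : ℝ × ℝ → ℝ :=
  fun x => MvPolynomial.eval ![x.1, x.2] P

/-- Directional derivative of `f : ℝ × ℝ → ℝ` in direction `n`. -/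
noncomputable def dirDeriv (n : ℝ × ℝ) (f : ℝ × ℝ → ℝ) : ℝ × ℝ → ℝ :=
  fun x => fderiv ℝ f x n

/-- Laplacian of `f : ℝ × ℝ → ℝ`. -/
noncomputable def lap2 (f : ℝ × ℝ → ℝ) : ℝ × ℝ → ℝ :=
  fun x => dirDeriv (1, 0) (dirDeriv (1, 0) f) x + dirDeriv (0, 1) (dirDeriv (0, 1) f) x

open MvPolynomial

/-- The directional derivative operator at the polynomial level. -/
noncomputable def Dd (d : ℝ × ℝ) (w : MvPolynomial (Fin 2) ℝ) : MvPolynomial (Fin 2) ℝ :=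
  C d.1 * pderiv 0 w + C d.2 * pderiv 1 w

/-- The Laplacian at the polynomial level. -/
noncomputable def LapP (w : MvPolynomial (Fin 2) ℝ) : MvPolynomial (Fin 2) ℝ :=
  pderiv 0 (pderiv 0 w) + pderiv 1 (pderiv 1 w)

lemma pderiv_comm' (i j : Fin 2) (f : MvPolynomial (Fin 2) ℝ) :
    pderiv i (pderiv j f) = pderiv j (pderiv i f) := by
  induction f using MvPolynomial.induction_on' with
  | monomial s a =>
    rcases eq_or_ne i j with rfl | hij
    · rfl
    · simp only [pderiv_monomial, Finsupp.tsub_apply, Finsupp.single_eq_of_ne hij,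
        Finsupp.single_eq_of_ne hij.symm, tsub_zero]
      congr 1
      · congr 1
        ext k
        simp only [Finsupp.tsub_apply, Finsupp.single_apply]
        split_ifs <;> omega
      · ring
  | add p q hp hq => simp [hp, hq]

/-- The total derivative of `polyEval w` at `x` as a continuous linear map. -/
noncomputable def Lw (w : MvPolynomial (Fin 2) ℝ) (x : ℝ × ℝ) : (ℝ × ℝ) →L[ℝ] ℝ :=
  polyEval (pderiv 0 w) x • ContinuousLinearMap.fst ℝ ℝ ℝ
    + polyEval (pderiv 1 w) x • ContinuousLinearMap.snd ℝ ℝ ℝ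

lemma Lw_apply (w : MvPolynomial (Fin 2) ℝ) (x d : ℝ × ℝ) :
    Lw w x d = polyEval (pderiv 0 w) x * d.1 + polyEval (pderiv 1 w) x * d.2 := by
  simp [Lw]

lemma hasFDerivAt_polyEval (w : MvPolynomial (Fin 2) ℝ) (x : ℝ × ℝ) :
    HasFDerivAt (polyEval w) (Lw w x) x := by
  induction w using MvPolynomial.induction_on with
  | C a =>
    have h1 : polyEval (C a) = fun _ : ℝ × ℝ => a := by
      funext y; simp [polyEval]
    have h2 : Lw (C a) x = 0 := by
      simp [Lw, polyEval]
    rw [h1, h2]; exact hasFDerivAt_const a x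
  | add p q hp hq =>
    have h1 : polyEval (p + q) = fun y => polyEval p y + polyEval q y := by
      funext y; simp [polyEval]
    have h2 : Lw (p + q) x = Lw p x + Lw q x := by
      refine ContinuousLinearMap.ext fun y => ?_
      simp only [Lw_apply, ContinuousLinearMap.add_apply, polyEval, map_add]
      ring
    rw [h1, h2]; exact hp.add hq
  | mul_X q i hq =>
    fin_cases i
    · show HasFDerivAt (polyEval (q * X 0)) (Lw (q * X 0) x) x
      have h1 : polyEval (q * X 0) = fun y : ℝ × ℝ => polyEval q y * y.1 := by
        funext y; simp [polyEval]
      rw [h1]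
      refine (hq.mul (hasFDerivAt_fst (p := x))).congr_fderiv ?_
      refine ContinuousLinearMap.ext fun y => ?_
      simp only [Lw_apply, ContinuousLinearMap.add_apply, ContinuousLinearMap.smul_apply,
        ContinuousLinearMap.coe_fst', smul_eq_mul, pderiv_mul, pderiv_X_self, pderiv_X_of_ne,
        polyEval, map_add, map_mul, eval_X, Matrix.cons_val_zero, Matrix.cons_val_one,
        Matrix.head_cons, mul_one, mul_zero, add_zero, zero_add,
        pderiv_X_of_ne (show (0 : Fin 2) ≠ 1 by decide), map_zero]
      ring
    · show HasFDerivAt (polyEval (q * X 1)) (Lw (q * X 1) x) x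
      have h1 : polyEval (q * X 1) = fun y : ℝ × ℝ => polyEval q y * y.2 := by
        funext y; simp [polyEval]
      rw [h1]
      refine (hq.mul (hasFDerivAt_snd (p := x))).congr_fderiv ?_
      refine ContinuousLinearMap.ext fun y => ?_
      simp only [Lw_apply, ContinuousLinearMap.add_apply, ContinuousLinearMap.smul_apply,
        ContinuousLinearMap.coe_snd', smul_eq_mul, pderiv_mul, pderiv_X_self, pderiv_X_of_ne,
        polyEval, map_add, map_mul, eval_X, Matrix.cons_val_zero, Matrix.cons_val_one,
        Matrix.head_cons, mul_one, mul_zero, add_zero, zero_add,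
        pderiv_X_of_ne (show (1 : Fin 2) ≠ 0 by decide), map_zero]
      ring

lemma dirDeriv_polyEval (d : ℝ × ℝ) (w : MvPolynomial (Fin 2) ℝ) :
    dirDeriv d (polyEval w) = polyEval (Dd d w) := by
  funext x
  have h := (hasFDerivAt_polyEval w x).fderiv
  simp only [dirDeriv, h, Lw_apply]
  simp only [polyEval, Dd, map_add, map_mul, eval_C]
  ring

lemma lap2_polyEval (w : MvPolynomial (Fin 2) ℝ) :
    lap2 (polyEval w) = polyEval (LapP w) := by
  funext x
  have e1 : ∀ u : MvPolynomial (Fin 2) ℝ, Dd ((1 : ℝ), (0 : ℝ)) u = pderiv 0 u := by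
    intro u; simp [Dd]
  have e2 : ∀ u : MvPolynomial (Fin 2) ℝ, Dd ((0 : ℝ), (1 : ℝ)) u = pderiv 1 u := by
    intro u; simp [Dd]
  simp only [lap2, dirDeriv_polyEval, e1, e2]
  simp [polyEval, LapP]

lemma iter_dirDeriv (d : ℝ × ℝ) (l : ℕ) (w : MvPolynomial (Fin 2) ℝ) :
    (dirDeriv d)^[l] (polyEval w) = polyEval ((Dd d)^[l] w) := by
  induction l generalizing w with
  | zero => rfl
  | succ l ih =>
    rw [Function.iterate_succ_apply, Function.iterate_succ_apply, dirDeriv_polyEval, ih]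

lemma Dd_LapP (d : ℝ × ℝ) (w : MvPolynomial (Fin 2) ℝ) :
    Dd d (LapP w) = LapP (Dd d w) := by
  have e1 : pderiv 0 (pderiv 1 (pderiv 1 w)) = pderiv 1 (pderiv 1 (pderiv 0 w)) := by
    rw [pderiv_comm' 0 1 (pderiv 1 w)]
    exact congrArg _ (pderiv_comm' 0 1 w)
  have e2 : pderiv 1 (pderiv 0 (pderiv 0 w)) = pderiv 0 (pderiv 0 (pderiv 1 w)) := by
    rw [pderiv_comm' 1 0 (pderiv 0 w)]
    exact congrArg _ (pderiv_comm' 1 0 w)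
  simp only [Dd, LapP, map_add, mul_add, pderiv_C_mul, e1, e2]
  ring

lemma iter_Dd_LapP (d : ℝ × ℝ) (m : ℕ) (w : MvPolynomial (Fin 2) ℝ) :
    (Dd d)^[m] (LapP w) = LapP ((Dd d)^[m] w) := by
  induction m with
  | zero => rfl
  | succ m ih =>
    rw [Function.iterate_succ_apply', Function.iterate_succ_apply', ih, Dd_LapP]

lemma key_ident (nn τ : ℝ × ℝ) (c : ℝ) (hn : nn.1 ^ 2 + nn.2 ^ 2 = 1)
    (hτ1 : τ.1 = -c * nn.2) (hτ2 : τ.2 = c * nn.1) (w : MvPolynomial (Fin 2) ℝ) :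
    C (c ^ 2) * Dd nn (Dd nn w) + Dd τ (Dd τ w) = C (c ^ 2) * LapP w := by
  have hC : (C nn.1 : MvPolynomial (Fin 2) ℝ) ^ 2 + (C nn.2) ^ 2 = 1 := by
    rw [← map_pow, ← map_pow, ← map_add, hn, map_one]
  simp only [Dd, LapP, map_add, pderiv_C_mul]
  rw [hτ1, hτ2]
  simp only [map_mul, map_neg, map_pow]
  linear_combination (C c ^ 2 *
    (pderiv 0 (pderiv 0 w) + pderiv 1 (pderiv 1 w)) : MvPolynomial (Fin 2) ℝ) * hC

/-- Substitution of a parametrized line into a bivariate polynomial. -/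
noncomputable def lineg (x0 d : ℝ × ℝ) : Fin 2 → Polynomial ℝ :=
  ![Polynomial.C x0.1 + Polynomial.C d.1 * Polynomial.X,
    Polynomial.C x0.2 + Polynomial.C d.2 * Polynomial.X]

noncomputable def lineP (x0 d : ℝ × ℝ) (w : MvPolynomial (Fin 2) ℝ) : Polynomial ℝ :=
  MvPolynomial.aeval (lineg x0 d) w

lemma lineP_eval (x0 d : ℝ × ℝ) (w : MvPolynomial (Fin 2) ℝ) (t : ℝ) :
    (lineP x0 d w).eval t = polyEval w (x0 + t • d) := by
  induction w using MvPolynomial.induction_on with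
  | C a => simp [lineP, polyEval]
  | add p q hp hq =>
    simp only [lineP, map_add, Polynomial.eval_add] at hp hq ⊢
    simp only [polyEval, map_add] at hp hq ⊢
    rw [hp, hq]
  | mul_X q i hq =>
    simp only [lineP, map_mul, Polynomial.eval_mul, aeval_X] at hq ⊢
    simp only [polyEval, map_mul, eval_X] at hq ⊢
    rw [hq]
    congr 1
    fin_cases i <;>
      simp [lineg, Prod.fst_add, Prod.snd_add, Prod.smul_fst, Prod.smul_snd, smul_eq_mul] <;>
      ring

lemma natDegree_lineP_le (x0 d : ℝ × ℝ) (w : MvPolynomial (Fin 2) ℝ) :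
    (lineP x0 d w).natDegree ≤ w.totalDegree := by
  classical
  have hg : ∀ i, (lineg x0 d i).natDegree ≤ 1 := by
    intro i
    fin_cases i <;>
      · refine (Polynomial.natDegree_add_le _ _).trans ?_
        simp only [lineg, Matrix.cons_val_zero, Matrix.cons_val_one, Matrix.head_cons,
          Polynomial.natDegree_C, max_le_iff]
        exact ⟨Nat.zero_le 1, (Polynomial.natDegree_C_mul_le _ _).trans Polynomial.natDegree_X_le⟩
  rw [lineP]
  nth_rewrite 1 [MvPolynomial.as_sum w]
  rw [map_sum]
  apply Polynomial.natDegree_sum_le_of_forall_le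
  intro s hs
  rw [MvPolynomial.aeval_monomial]
  refine le_trans ?_ (MvPolynomial.le_totalDegree hs)
  have halg : (algebraMap ℝ (Polynomial ℝ)) (coeff s w) = Polynomial.C (coeff s w) := rfl
  rw [halg]
  refine (Polynomial.natDegree_C_mul_le _ _).trans ?_
  rw [Finsupp.prod]
  refine (Polynomial.natDegree_prod_le _ _).trans ?_
  rw [Finsupp.sum]
  apply Finset.sum_le_sum
  intro i _
  refine (Polynomial.natDegree_pow_le).trans ?_
  calc s i * (lineg x0 d i).natDegree ≤ s i * 1 := Nat.mul_le_mul_left _ (hg i)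
    _ = s i := mul_one _

lemma hasDerivAt_line (w : MvPolynomial (Fin 2) ℝ) (x0 d : ℝ × ℝ) (t : ℝ) :
    HasDerivAt (fun t : ℝ => polyEval w (x0 + t • d)) (polyEval (Dd d w) (x0 + t • d)) t := by
  have hline : HasDerivAt (fun t : ℝ => x0 + t • d) d t := by
    simpa using ((hasDerivAt_id t).smul_const d).const_add x0
  have h2 := (hasFDerivAt_polyEval w (x0 + t • d)).comp_hasDerivAt t hline
  refine h2.congr_deriv ?_
  rw [Lw_apply]
  simp only [polyEval, Dd, map_add, map_mul, eval_C]
  ring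

lemma derivative_lineP (x0 d : ℝ × ℝ) (w : MvPolynomial (Fin 2) ℝ) :
    Polynomial.derivative (lineP x0 d w) = lineP x0 d (Dd d w) := by
  apply Polynomial.funext
  intro t
  rw [lineP_eval]
  have h1 : (fun u : ℝ => (lineP x0 d w).eval u) = fun u => polyEval w (x0 + u • d) := by
    funext u; rw [lineP_eval]
  rw [← (hasDerivAt_line w x0 d t).deriv, ← h1, Polynomial.deriv]

lemma iterate_derivative_lineP (x0 d : ℝ × ℝ) (w : MvPolynomial (Fin 2) ℝ) (k : ℕ) :
    Polynomial.derivative^[k] (lineP x0 d w) = lineP x0 d ((Dd d)^[k] w) := by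
  induction k with
  | zero => rfl
  | succ k ih =>
    rw [Function.iterate_succ_apply', Function.iterate_succ_apply', ih, derivative_lineP]

lemma poly_zero_of (q : Polynomial ℝ) (p : ℕ) (hdeg : q.natDegree ≤ p)
    (h : ∀ k ≤ p, (Polynomial.derivative^[k] q).eval 0 = 0) : q = 0 := by
  ext k
  rw [Polynomial.coeff_zero]
  rcases le_or_gt k p with hk | hk
  · have hh := h k hk
    rw [← Polynomial.coeff_zero_eq_eval_zero, Polynomial.coeff_iterate_derivative] at hh
    rw [zero_add, Nat.descFactorial_self, nsmul_eq_mul] at hh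
    exact (mul_eq_zero.mp hh).resolve_left (by exact_mod_cast Nat.factorial_ne_zero k)
  · exact Polynomial.coeff_eq_zero_of_natDegree_lt (lt_of_le_of_lt hdeg hk)

lemma extend_line (A τ : ℝ × ℝ) (w : MvPolynomial (Fin 2) ℝ)
    (h : ∀ s ∈ Set.Icc (0 : ℝ) 1, polyEval w (A + s • τ) = 0) :
    ∀ s : ℝ, polyEval w (A + s • τ) = 0 := by
  have hq : lineP A τ w = 0 := by
    apply Polynomial.eq_zero_of_infinite_isRoot
    apply (Set.Icc_infinite (by norm_num : (0:ℝ) < 1)).mono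
    intro x hx
    simp only [Set.mem_setOf_eq, Polynomial.IsRoot, lineP_eval]
    exact h x hx
  intro s
  rw [← lineP_eval, hq, Polynomial.eval_zero]

lemma tangent_deriv (A τ : ℝ × ℝ) (w : MvPolynomial (Fin 2) ℝ)
    (h : ∀ s : ℝ, polyEval w (A + s • τ) = 0) :
    ∀ s : ℝ, polyEval (Dd τ w) (A + s • τ) = 0 := by
  intro s
  have h1 : (fun t : ℝ => polyEval w ((A + s • τ) + t • τ)) = fun _ => (0 : ℝ) := by
    funext t
    have e : (A + s • τ) + t • τ = A + (s + t) • τ := by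
      rw [add_smul]; abel
    rw [e, h]
  have h2 := hasDerivAt_line w (A + s • τ) τ 0
  rw [h1] at h2
  have h3 := h2.unique (hasDerivAt_const 0 0)
  simpa using h3

/-- A polynomial of degree `≤ p` vanishing on a line segment `Γ` together with its
normal derivative and the normal derivatives of its Laplacian up to order `p − 2`
is identically zero. -/
theorem stmt_11 (p : ℕ) (hp : 1 ≤ p) (A B : ℝ × ℝ) (hAB : A ≠ B)
    (n : ℝ × ℝ) (hn : n.1 ^ 2 + n.2 ^ 2 = 1)
    (hperp : n.1 * (B.1 - A.1) + n.2 * (B.2 - A.2) = 0)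
    (v : MvPolynomial (Fin 2) ℝ) (hdeg : v.totalDegree ≤ p)
    (h0 : ∀ x ∈ segment ℝ A B, polyEval v x = 0)
    (h1 : ∀ x ∈ segment ℝ A B, dirDeriv n (polyEval v) x = 0)
    (h2 : ∀ l, l ≤ p - 2 → ∀ x ∈ segment ℝ A B,
      (dirDeriv n)^[l] (lap2 (polyEval v)) x = 0) :
    v = 0 := by
  classical
  set τ : ℝ × ℝ := B - A with hτdef
  have hp1 : n.1 * τ.1 + n.2 * τ.2 = 0 := hperp
  obtain ⟨c, hτ1, hτ2, hcz⟩ : ∃ c : ℝ, τ.1 = -c * n.2 ∧ τ.2 = c * n.1 ∧ c ≠ 0 := by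
    refine ⟨n.1 * τ.2 - n.2 * τ.1, by linear_combination (-τ.1) * hn + n.1 * hp1,
      by linear_combination (-τ.2) * hn + n.2 * hp1, ?_⟩
    intro h0'
    apply hAB
    have t1 : τ.1 = 0 := by
      linear_combination (-τ.1) * hn + n.1 * hp1 + (-n.2) * h0'
    have t2 : τ.2 = 0 := by
      linear_combination (-τ.2) * hn + n.2 * hp1 + n.1 * h0'
    have hτ0 : τ = 0 := Prod.ext t1 t2
    have : B - A = 0 := hτ0
    have hBA := sub_eq_zero.mp this
    exact hBA.symm
  have hτ1' : τ.1 = -c * n.2 := hτ1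
  have hseg : ∀ s ∈ Set.Icc (0 : ℝ) 1, A + s • τ ∈ segment ℝ A B := by
    intro s hs
    rw [segment_eq_image']
    exact ⟨s, hs, rfl⟩
  -- main induction
  have key : ∀ k, k ≤ p → ∀ s : ℝ, polyEval ((Dd n)^[k] v) (A + s • τ) = 0 := by
    intro k
    induction k using Nat.strong_induction_on with
    | _ k ih =>
      rcases k with _ | k
      · intro _
        exact extend_line A τ v (fun s hs => h0 _ (hseg s hs))
      rcases k with _ | m
      · intro _
        exact extend_line A τ (Dd n v) (fun s hs => by
          have hh := h1 _ (hseg s hs)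
          rwa [dirDeriv_polyEval] at hh)
      · intro hk
        have hm2 : m ≤ p - 2 := by omega
        have hw : ∀ s : ℝ, polyEval ((Dd n)^[m] v) (A + s • τ) = 0 :=
          ih m (by omega) (by omega)
        have hLap : ∀ s : ℝ, polyEval (LapP ((Dd n)^[m] v)) (A + s • τ) = 0 := by
          apply extend_line A τ _
          intro s hs
          have hh := h2 m hm2 _ (hseg s hs)
          rw [lap2_polyEval, iter_dirDeriv, iter_Dd_LapP] at hh
          exact hh
        have ht1 := tangent_deriv A τ _ hw
        have ht2 := tangent_deriv A τ _ ht1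
        intro s
        have hid := key_ident n τ c hn hτ1 hτ2 ((Dd n)^[m] v)
        have hev := congrArg (MvPolynomial.eval ![(A + s • τ).1, (A + s • τ).2]) hid
        simp only [map_add, map_mul, eval_C] at hev
        have e1 := ht2 s
        have e2 := hLap s
        simp only [polyEval] at e1 e2
        rw [Function.iterate_succ_apply', Function.iterate_succ_apply']
        have hX : c ^ 2 * polyEval (Dd n (Dd n ((Dd n)^[m] v))) (A + s • τ) = 0 := by
          simp only [polyEval]
          rw [e1] at hev
          rw [e2] at hev
          linarith [hev]
        have hc2 : (c : ℝ) ^ 2 ≠ 0 := pow_ne_zero 2 hcz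
        exact (mul_eq_zero.mp hX).resolve_left hc2
  -- vanish on all normal lines through the segment's line
  have hvan : ∀ s t : ℝ, polyEval v ((A + s • τ) + t • n) = 0 := by
    intro s t
    have hq0 : lineP (A + s • τ) n v = 0 := by
      apply poly_zero_of _ p ((natDegree_lineP_le _ _ _).trans hdeg)
      intro k hk
      rw [iterate_derivative_lineP, lineP_eval]
      have := key k hk s
      simpa using this
    have he := lineP_eval (A + s • τ) n v t
    rw [hq0, Polynomial.eval_zero] at he
    exact he.symm
  -- vanish everywhere
  have hall : ∀ y : ℝ × ℝ, polyEval v y = 0 := by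
    intro y
    set s : ℝ := ((y.1 - A.1) * τ.1 + (y.2 - A.2) * τ.2) / c ^ 2 with hs
    set t : ℝ := (y.1 - A.1) * n.1 + (y.2 - A.2) * n.2 with ht
    have hy : y = (A + s • τ) + t • n := by
      have h1c : (A + s • τ + t • n).1 = A.1 + s * τ.1 + t * n.1 := rfl
      have h2c : (A + s • τ + t • n).2 = A.2 + s * τ.2 + t * n.2 := rfl
      apply Prod.ext
      · rw [h1c, hs, ht, hτ1, hτ2]
        field_simp
        linear_combination (-(y.1 - A.1)) * hn
      · rw [h2c, hs, ht, hτ1, hτ2]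
        field_simp
        linear_combination (-(y.2 - A.2)) * hn
    rw [hy]
    exact hvan s t
  apply MvPolynomial.funext
  intro x
  have hx : ![x 0, x 1] = x := by
    funext i; fin_cases i <;> rfl
  have := hall (x 0, x 1)
  simp only [polyEval] at this
  rw [map_zero, ← hx]
  exact this
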